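/- Let H, H_* ∈ R^{d×d} be symmetric positive definite, let B ∈ R^{d×d} be symmetric, and let S ∈ R^{d×τ} have full column rank. Define the projection Z = H^{1/2} S (Sᵀ H S)⁻¹ Sᵀ H^{1/2}, R = H^{1/2}(B − H_*⁻¹)H^{1/2}, and the BFGS update B₊ = BFGS(B, H, S) = G + (I − GH)B(I − HG) with G = S(SᵀHS)⁻¹Sᵀ. Then ‖B₊ − H_*⁻¹‖²_{F(H)} ≤ tr(R(I − Z)R) + ‖H − H_*‖²_{F(H_*⁻¹)}. -/

import Mathlib

open Matrix MeasureTheory Filter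
open scoped Classical

noncomputable section

/-- Vectors in `ℝ^d` with the Euclidean (2-)norm. -/
abbrev Vec (d : ℕ) := EuclideanSpace ℝ (Fin d)

/-- Matrix square root of a positive semidefinite matrix (junk value `0` otherwise). -/
noncomputable def msqrt {d : ℕ} (M : Matrix (Fin d) (Fin d) ℝ) : Matrix (Fin d) (Fin d) ℝ :=
  if h : M.PosSemidef then
    h.1.eigenvectorUnitary * diagonal (Real.sqrt ∘ h.1.eigenvalues) *
      (star h.1.eigenvectorUnitary : Matrix (Fin d) (Fin d) ℝ) else 0

/-- Frobenius norm of a square matrix. -/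
noncomputable def frobNorm {d : ℕ} (M : Matrix (Fin d) (Fin d) ℝ) : ℝ :=
  Real.sqrt (Matrix.trace (Mᵀ * M))

/-- Weighted Frobenius norm `‖W‖_{F(H)} = ‖H^{1/2} W H^{1/2}‖_F`. -/
noncomputable def wFrob {d : ℕ} (H W : Matrix (Fin d) (Fin d) ℝ) : ℝ :=
  frobNorm (msqrt H * W * msqrt H)

/-- Local norm `‖v‖_H = √⟨H v, v⟩`. -/
noncomputable def localNorm {d : ℕ} (H : Matrix (Fin d) (Fin d) ℝ) (v : Vec d) : ℝ :=
  Real.sqrt (inner ℝ (Matrix.toEuclideanLin H v) v : ℝ)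

/-- `f` is self-concordant, expressed through its Hessian map `Hf`:
the Hessian is everywhere positive definite and the local norms at nearby points are
comparable. -/
def SelfConcordant {d : ℕ} (Hf : Vec d → Matrix (Fin d) (Fin d) ℝ) : Prop :=
  (∀ x, (Hf x).PosDef) ∧
  ∀ x y v : Vec d, localNorm (Hf x) (y - x) < 1 → v ≠ 0 →
    1 - localNorm (Hf x) (y - x) ≤ localNorm (Hf y) v / localNorm (Hf x) v ∧
      localNorm (Hf y) v / localNorm (Hf x) v ≤ 1 / (1 - localNorm (Hf x) (y - x))

/-- `g` is the gradient of `f` and `Hf` is its Hessian (the derivative of the gradient). -/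
def IsGradHess {d : ℕ} (f : Vec d → ℝ) (g : Vec d → Vec d)
    (Hf : Vec d → Matrix (Fin d) (Fin d) ℝ) : Prop :=
  (∀ x, HasGradientAt f (g x) x) ∧
  ∀ x, HasFDerivAt g (Matrix.toEuclideanCLM (𝕜 := ℝ) (Hf x) : Vec d →L[ℝ] Vec d) x

/-- Smallest eigenvalue of a symmetric matrix, via the Rayleigh quotient. -/
noncomputable def lambdaMin {d : ℕ} (M : Matrix (Fin d) (Fin d) ℝ) : ℝ :=
  ⨅ v : {v : Vec d // ‖v‖ = 1}, (inner ℝ (Matrix.toEuclideanLin M v.1) v.1 : ℝ)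

/-- Entrywise expectation of a random matrix. -/
noncomputable def expMat {Ω : Type*} [MeasurableSpace Ω] (μ : Measure Ω)
    {m n : ℕ} (M : Ω → Matrix (Fin m) (Fin n) ℝ) : Matrix (Fin m) (Fin n) ℝ :=
  Matrix.of fun i j => ∫ ω, M ω i j ∂μ

/-- The projection matrix `Z = H^{1/2} S (Sᵀ H S)⁻¹ Sᵀ H^{1/2}`. -/
noncomputable def sketchProj {d τ : ℕ} (H : Matrix (Fin d) (Fin d) ℝ)
    (S : Matrix (Fin d) (Fin τ) ℝ) : Matrix (Fin d) (Fin d) ℝ :=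
  msqrt H * S * (Sᵀ * H * S)⁻¹ * Sᵀ * msqrt H

/-- The (randomized) BFGS update
`BFGS(B, H, S) = G + (I - G H) B (I - H G)` with `G = S (Sᵀ H S)⁻¹ Sᵀ`. -/
noncomputable def bfgsUpdate {d τ : ℕ} (B H : Matrix (Fin d) (Fin d) ℝ)
    (S : Matrix (Fin d) (Fin τ) ℝ) : Matrix (Fin d) (Fin d) ℝ :=
  S * (Sᵀ * H * S)⁻¹ * Sᵀ +
    (1 - S * (Sᵀ * H * S)⁻¹ * Sᵀ * H) * B * (1 - H * (S * (Sᵀ * H * S)⁻¹ * Sᵀ))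

/-- Spectral (operator 2-)norm of a matrix. -/
noncomputable def opNorm2 {d : ℕ} (M : Matrix (Fin d) (Fin d) ℝ) : ℝ :=
  ‖(Matrix.toEuclideanCLM (𝕜 := ℝ) M : Vec d →L[ℝ] Vec d)‖

instance matrixMeasurableSpace {m n : Type*} : MeasurableSpace (Matrix m n ℝ) :=
  MeasurableSpace.pi

/-- The sketching matrices `S k` are i.i.d. samples from a common distribution `D`. -/
def IIDSketch {d τ : ℕ} {Ω : Type*} [MeasurableSpace Ω] (μ : Measure Ω)
    (S : ℕ → Ω → Matrix (Fin d) (Fin τ) ℝ) : Prop :=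
  (∀ k, Measurable (S k)) ∧
  ProbabilityTheory.iIndepFun (m := fun _ => matrixMeasurableSpace) S μ ∧
  ∀ k, Measure.map (S k) μ = Measure.map (S 0) μ

end


set_option maxHeartbeats 1600000

lemma trace_transpose_mul_self_nonneg' {d : ℕ} (X : Matrix (Fin d) (Fin d) ℝ) :
    0 ≤ Matrix.trace (Xᵀ * X) := by
  simp only [Matrix.trace, Matrix.diag, Matrix.mul_apply, Matrix.transpose_apply]
  exact Finset.sum_nonneg fun i _ => Finset.sum_nonneg fun j _ => mul_self_nonneg _

lemma wFrob_sq' {d : ℕ} (H W : Matrix (Fin d) (Fin d) ℝ) :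
    wFrob H W ^ 2 = Matrix.trace ((msqrt H * W * msqrt H)ᵀ * (msqrt H * W * msqrt H)) := by
  rw [wFrob, frobNorm, Real.sq_sqrt (trace_transpose_mul_self_nonneg' _)]

lemma msqrt_mul_self' {d : ℕ} {M : Matrix (Fin d) (Fin d) ℝ} (h : M.PosSemidef) :
    msqrt M * msqrt M = M := by
  rw [msqrt, dif_pos h]
  have hU : (star h.1.eigenvectorUnitary : Matrix (Fin d) (Fin d) ℝ) * h.1.eigenvectorUnitary = 1 :=
    Unitary.coe_star_mul_self _
  have hD : diagonal (Real.sqrt ∘ h.1.eigenvalues) * diagonal (Real.sqrt ∘ h.1.eigenvalues)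
      = diagonal (RCLike.ofReal ∘ h.1.eigenvalues) := by
    rw [diagonal_mul_diagonal]; congr 1; funext i
    simp [Real.mul_self_sqrt (h.eigenvalues_nonneg i)]
  conv_rhs => rw [h.1.spectral_theorem]
  rw [Unitary.conjStarAlgAut_apply, ← hD]
  simp only [Matrix.mul_assoc]
  rw [← Matrix.mul_assoc (star _ : Matrix (Fin d) (Fin d) ℝ) (h.1.eigenvectorUnitary : Matrix (Fin d) (Fin d) ℝ), hU, Matrix.one_mul]

lemma msqrt_transpose' {d : ℕ} {M : Matrix (Fin d) (Fin d) ℝ} (h : M.PosSemidef) :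
    (msqrt M)ᵀ = msqrt M := by
  rw [msqrt, dif_pos h]
  simp only [Matrix.transpose_mul, Matrix.star_eq_conjTranspose, conjTranspose_eq_transpose_of_trivial,
    Matrix.transpose_transpose, diagonal_transpose, Matrix.mul_assoc]

lemma posdef_transpose_eq' {d : ℕ} {M : Matrix (Fin d) (Fin d) ℝ} (h : M.PosDef) : Mᵀ = M := by
  have h1 := h.1.eq; rwa [Matrix.conjTranspose_eq_transpose_of_trivial] at h1

lemma inj_of_rank' {d τ : ℕ} (S : Matrix (Fin d) (Fin τ) ℝ) (hS : S.rank = τ) :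
    Function.Injective S.mulVec := by
  have h1 := S.mulVecLin.finrank_range_add_finrank_ker
  rw [Matrix.rank] at hS
  rw [hS, Module.finrank_pi] at h1
  simp at h1
  intro x y hxy
  exact LinearMap.ker_eq_bot.mp h1 hxy

lemma posdef_N' {d τ : ℕ} (H : Matrix (Fin d) (Fin d) ℝ) (hH : H.PosDef)
    (S : Matrix (Fin d) (Fin τ) ℝ) (hS : S.rank = τ) : (Sᵀ * H * S).PosDef := by
  refine Matrix.PosDef.of_dotProduct_mulVec_pos ?_ ?_
  · simpa using Matrix.isHermitian_conjTranspose_mul_mul S hH.1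
  · intro x hx
    have hSx : S.mulVec x ≠ 0 := fun h => hx (inj_of_rank' S hS (by simp [h]))
    have h2 := hH.dotProduct_mulVec_pos hSx
    have : star x ⬝ᵥ (Sᵀ * H * S) *ᵥ x = star (S *ᵥ x) ⬝ᵥ H *ᵥ (S *ᵥ x) := by
      simp only [star_trivial, ← Matrix.mulVec_mulVec, Matrix.dotProduct_mulVec,
        Matrix.vecMul_transpose]
    rw [this]; exact h2

open Matrix in
lemma master_trace_identity {d : ℕ} (T A Z : Matrix (Fin d) (Fin d) ℝ) (hZ : Z * Z = Z) :
    trace ((Z + (1-Z)*(T+A)*(1-Z) - A) * (Z + (1-Z)*(T+A)*(1-Z) - A))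
      + trace (Z*T*(1-Z)*T*Z)
      + trace (((1-Z)*(1-A)*(1-Z)) * ((1-Z)*(1-A)*(1-Z)))
    = trace (T*(1-Z)*T) + trace ((1-A)*(1-A)) := by
  have hZ' : ∀ X : Matrix (Fin d) (Fin d) ℝ, Z * (Z * X) = Z * X := by
    intro X; rw [← mul_assoc, hZ]
  have rot : ∀ X Y : Matrix (Fin d) (Fin d) ℝ, trace (X * Y) = trace (Y * X) :=
    fun X Y => trace_mul_comm X Y
  have h1 : trace (Z*(A*Z)) = trace (A*Z) := by rw [rot]; simp only [mul_assoc, hZ, hZ']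
  have h2 : trace (Z*(T*T)) = trace (T*(T*Z)) := by rw [rot]; simp only [mul_assoc]
  have h3 : trace (Z*(A*T)) = trace (A*(T*Z)) := by rw [rot]; simp only [mul_assoc]
  have h4 : trace (T*(Z*T)) = trace (T*(T*Z)) := by
    rw [rot]; simp only [mul_assoc]; rw [rot]; simp only [mul_assoc]
  have h5 : trace (Z*(T*(Z*T))) = trace (T*(Z*(T*Z))) := by rw [rot]; simp only [mul_assoc]
  have h6 : trace (Z*(A*(Z*T))) = trace (A*(Z*(T*Z))) := by rw [rot]; simp only [mul_assoc]
  have h7 : trace (Z*A) = trace (A*Z) := by rw [rot]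
  have h8 : trace (Z*(A*A)) = trace (A*(A*Z)) := by rw [rot]; simp only [mul_assoc]
  have h9 : trace (Z*(A*(Z*A))) = trace (A*(Z*(A*Z))) := by rw [rot]; simp only [mul_assoc]
  have h10 : trace (Z*(T*(T*Z))) = trace (T*(T*Z)) := by rw [rot]; simp only [mul_assoc, hZ, hZ']
  have h11 : trace (Z*(A*(T*Z))) = trace (A*(T*Z)) := by rw [rot]; simp only [mul_assoc, hZ, hZ']
  have h12 : trace (Z*(T*(Z*(T*Z)))) = trace (T*(Z*(T*Z))) := by
    rw [rot]; simp only [mul_assoc, hZ, hZ']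
  have h13 : trace (T*(A*Z)) = trace (A*(Z*T)) := by rw [rot]; simp only [mul_assoc]
  have h14 : trace (Z*(T*(A*Z))) = trace (T*(A*Z)) := by rw [rot]; simp only [mul_assoc, hZ, hZ']
  have h15 : trace (Z*(A*(A*Z))) = trace (A*(A*Z)) := by rw [rot]; simp only [mul_assoc, hZ, hZ']
  have h16 : trace (Z*(T*(Z*(A*Z)))) = trace (T*(Z*(A*Z))) := by
    rw [rot]; simp only [mul_assoc, hZ, hZ']
  have h17 : trace (Z*(A*(Z*(A*Z)))) = trace (A*(Z*(A*Z))) := by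
    rw [rot]; simp only [mul_assoc, hZ, hZ']
  have h18 : trace (T*(Z*(A*Z))) = trace (A*(Z*(T*Z))) := by
    rw [rot]; simp only [mul_assoc]; rw [rot]; simp only [mul_assoc, hZ, hZ']
  have h19 : trace (Z*T) = trace (T*Z) := by rw [rot]
  have h20 : trace (Z*(T*Z)) = trace (T*Z) := by rw [rot]; simp only [mul_assoc, hZ, hZ']
  have h21 : trace (T*A) = trace (A*T) := by rw [rot]
  have h22 : trace (Z*(T*A)) = trace (T*(A*Z)) := by rw [rot]; simp only [mul_assoc]
  have h23 : trace (T*(Z*A)) = trace (A*(T*Z)) := by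
    rw [rot]; simp only [mul_assoc]; rw [rot]; simp only [mul_assoc]
  have h24 : trace (Z*(T*(Z*A))) = trace (T*(Z*(A*Z))) := by rw [rot]; simp only [mul_assoc]
  have h25 : trace (A*(Z*A)) = trace (A*(A*Z)) := by
    rw [rot]; simp only [mul_assoc]; rw [rot]; simp only [mul_assoc]
  have h26 : trace (Z*(A*(Z*(T*Z)))) = trace (A*(Z*(T*Z))) := by
    rw [rot]; simp only [mul_assoc, hZ, hZ']
  simp only [mul_sub, sub_mul, mul_add, add_mul, mul_one, one_mul, trace_sub, trace_add,
    mul_assoc, hZ, hZ']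
  simp only [h26,h1,h2,h3,h4,h5,h6,h7,h8,h9,h10,h11,h12,h13,h14,h15,h16,h17,h18,h19,h20,
    h21,h22,h23,h24,h25]
  ring

/-- **One-step contraction bound for the randomized BFGS matrix update.** -/
theorem bfgs_update_contraction
    {d τ : ℕ} (H Hstar : Matrix (Fin d) (Fin d) ℝ)
    (hH : H.PosDef) (hHstar : Hstar.PosDef)
    (B : Matrix (Fin d) (Fin d) ℝ) (hB : B.IsSymm)
    (S : Matrix (Fin d) (Fin τ) ℝ) (hS : S.rank = τ) :
    wFrob H (bfgsUpdate B H S - Hstar⁻¹) ^ 2 ≤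
      Matrix.trace (msqrt H * (B - Hstar⁻¹) * msqrt H * (1 - sketchProj H S) *
          (msqrt H * (B - Hstar⁻¹) * msqrt H)) +
        wFrob Hstar⁻¹ (H - Hstar) ^ 2 := by
  have hHps := hH.posSemidef
  set P := msqrt H with hPdef
  have hPP : P * P = H := msqrt_mul_self' hHps
  have hPt : Pᵀ = P := msqrt_transpose' hHps
  set N := Sᵀ * H * S with hNdef
  have hNpd : N.PosDef := posdef_N' H hH S hS
  have hNu : IsUnit N.det := (Matrix.isUnit_iff_isUnit_det N).mp hNpd.isUnit
  have hNinv : N⁻¹ * N = 1 := Matrix.nonsing_inv_mul N hNu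
  have hNinv' : N * N⁻¹ = 1 := Matrix.mul_nonsing_inv N hNu
  set Z := sketchProj H S with hZdef
  have hZexp : Z = P * S * N⁻¹ * Sᵀ * P := rfl
  have hc1 : ∀ (k : ℕ) (X : Matrix (Fin d) (Fin k) ℝ), P * (P * X) = H * X := by
    intro k X; rw [← Matrix.mul_assoc, hPP]
  have hc2 : ∀ (k : ℕ) (X : Matrix (Fin τ) (Fin k) ℝ), Sᵀ * (H * (S * X)) = N * X := by
    intro k X; simp only [hNdef, Matrix.mul_assoc]
  have hc3 : ∀ (k : ℕ) (X : Matrix (Fin τ) (Fin k) ℝ), N * (N⁻¹ * X) = X := by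
    intro k X; rw [← Matrix.mul_assoc, hNinv', Matrix.one_mul]
  have hZZ : Z * Z = Z := by
    rw [hZexp]
    simp only [Matrix.mul_assoc, hc1, hc2, hc3]
  have hZt : Zᵀ = Z := by
    rw [hZexp]
    simp only [Matrix.transpose_mul, Matrix.transpose_transpose, hPt,
      Matrix.transpose_nonsing_inv, posdef_transpose_eq' hNpd, Matrix.mul_assoc]
  have key : P * (bfgsUpdate B H S - Hstar⁻¹) * P =
      Z + (1 - Z) * ((P * (B - Hstar⁻¹) * P) + (P * Hstar⁻¹ * P)) * (1 - Z)
        - (P * Hstar⁻¹ * P) := by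
    have hTA : (P * (B - Hstar⁻¹) * P) + (P * Hstar⁻¹ * P) = P * B * P := by
      simp only [Matrix.mul_sub, Matrix.sub_mul]; abel
    rw [hTA, hZexp]
    have hbf : bfgsUpdate B H S =
        S * N⁻¹ * Sᵀ + (1 - S * N⁻¹ * Sᵀ * H) * B * (1 - H * (S * N⁻¹ * Sᵀ)) := rfl
    rw [hbf]
    simp only [Matrix.mul_sub, Matrix.sub_mul, Matrix.mul_add, Matrix.add_mul,
      Matrix.mul_one, Matrix.one_mul]
    simp only [Matrix.mul_assoc, hc1, hc2, hc3]
  -- symmetry facts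
  have hHst : Hstarᵀ = Hstar := posdef_transpose_eq' hHstar
  have hHsit : (Hstar⁻¹)ᵀ = Hstar⁻¹ := by
    rw [Matrix.transpose_nonsing_inv, hHst]
  have hTt : (P * (B - Hstar⁻¹) * P)ᵀ = P * (B - Hstar⁻¹) * P := by
    simp only [Matrix.transpose_mul, Matrix.transpose_sub, hPt, hB.eq, hHsit, Matrix.mul_assoc]
  have hAt : (P * Hstar⁻¹ * P)ᵀ = P * Hstar⁻¹ * P := by
    simp only [Matrix.transpose_mul, hPt, hHsit, Matrix.mul_assoc]
  set T := P * (B - Hstar⁻¹) * P with hTdef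
  set A := P * Hstar⁻¹ * P with hAdef
  set W := Z + (1 - Z) * (T + A) * (1 - Z) - A with hWdef
  have hWt : Wᵀ = W := by
    rw [hWdef]
    simp only [Matrix.transpose_add, Matrix.transpose_sub, Matrix.transpose_mul,
      Matrix.transpose_one, hZt, hTt, hAt, Matrix.mul_assoc]
  -- left-hand side as a trace
  have hLHS : wFrob H (bfgsUpdate B H S - Hstar⁻¹) ^ 2 = Matrix.trace (W * W) := by
    rw [wFrob_sq', ← hPdef, key, hWt]
  -- idempotence of 1 - Z
  have hu : (1 - Z) * (1 - Z) = 1 - Z := by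
    simp only [Matrix.mul_sub, Matrix.sub_mul, Matrix.mul_one, Matrix.one_mul, hZZ]
    abel
  have hu' : ∀ X : Matrix (Fin d) (Fin d) ℝ, (1 - Z) * ((1 - Z) * X) = (1 - Z) * X := by
    intro X; rw [← Matrix.mul_assoc, hu]
  -- slack terms are nonnegative
  have hs1 : 0 ≤ Matrix.trace (Z * T * (1 - Z) * T * Z) := by
    have h0 := trace_transpose_mul_self_nonneg' ((1 - Z) * (T * Z))
    have he : ((1 - Z) * (T * Z))ᵀ * ((1 - Z) * (T * Z)) = Z * T * (1 - Z) * T * Z := by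
      simp only [Matrix.transpose_mul, Matrix.transpose_sub, Matrix.transpose_one, hZt, hTt,
        Matrix.mul_assoc, hu']
    rwa [he] at h0
  have hs2 : 0 ≤ Matrix.trace (((1 - Z) * (1 - A) * (1 - Z)) * ((1 - Z) * (1 - A) * (1 - Z))) := by
    have h0 := trace_transpose_mul_self_nonneg' ((1 - Z) * ((1 - A) * (1 - Z)))
    have he : ((1 - Z) * ((1 - A) * (1 - Z)))ᵀ * ((1 - Z) * ((1 - A) * (1 - Z)))
        = ((1 - Z) * (1 - A) * (1 - Z)) * ((1 - Z) * (1 - A) * (1 - Z)) := by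
      simp only [Matrix.transpose_mul, Matrix.transpose_sub, Matrix.transpose_one, hZt, hAt,
        Matrix.mul_assoc, hu']
    rwa [he] at h0
  -- second term on the right
  have hsinv : Hstar⁻¹ * Hstar = 1 :=
    Matrix.nonsing_inv_mul Hstar ((Matrix.isUnit_iff_isUnit_det Hstar).mp hHstar.isUnit)
  have hsinv' : Hstar * Hstar⁻¹ = 1 :=
    Matrix.mul_nonsing_inv Hstar ((Matrix.isUnit_iff_isUnit_det Hstar).mp hHstar.isUnit)
  have hsec : wFrob Hstar⁻¹ (H - Hstar) ^ 2 = Matrix.trace ((1 - A) * (1 - A)) := by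
    have hQps : (Hstar⁻¹).PosSemidef := hHstar.inv.posSemidef
    set Q := msqrt Hstar⁻¹ with hQdef
    have hQQ : Q * Q = Hstar⁻¹ := msqrt_mul_self' hQps
    have hQt : Qᵀ = Q := msqrt_transpose' hQps
    have hKt : (H - Hstar)ᵀ = H - Hstar := by
      simp only [Matrix.transpose_sub, posdef_transpose_eq' hH, hHst]
    rw [wFrob_sq', ← hQdef]
    have he : (Q * (H - Hstar) * Q)ᵀ * (Q * (H - Hstar) * Q)
        = Q * ((H - Hstar) * (Q * (Q * ((H - Hstar) * Q)))) := by
      simp only [Matrix.transpose_mul, hQt, hKt, Matrix.mul_assoc]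
    rw [he]
    have hq1 : ∀ X : Matrix (Fin d) (Fin d) ℝ, Q * (Q * X) = Hstar⁻¹ * X := by
      intro X; rw [← Matrix.mul_assoc, hQQ]
    have hq2 : ∀ X : Matrix (Fin d) (Fin d) ℝ, Hstar⁻¹ * (Hstar * X) = X := by
      intro X; rw [← Matrix.mul_assoc, hsinv, Matrix.one_mul]
    have hq3 : ∀ X : Matrix (Fin d) (Fin d) ℝ, Hstar * (Hstar⁻¹ * X) = X := by
      intro X; rw [← Matrix.mul_assoc, hsinv', Matrix.one_mul]
    have rot : ∀ X Y : Matrix (Fin d) (Fin d) ℝ,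
        Matrix.trace (X * Y) = Matrix.trace (Y * X) := fun X Y => Matrix.trace_mul_comm X Y
    have e1a : Matrix.trace (Q * (H * (Hstar⁻¹ * (H * Q))))
        = Matrix.trace (Hstar⁻¹ * (H * (Hstar⁻¹ * H))) := by
      rw [rot]
      simp only [Matrix.mul_assoc, hq1, hQQ]
      rw [rot]
      simp only [Matrix.mul_assoc, hq1, hQQ]
    have e1b : Matrix.trace (P * (Hstar⁻¹ * (H * (Hstar⁻¹ * P))))
        = Matrix.trace (Hstar⁻¹ * (H * (Hstar⁻¹ * H))) := by
      rw [rot]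
      simp only [Matrix.mul_assoc, hc1, hPP]
    have e2a : Matrix.trace (Q * (H * Q)) = Matrix.trace (Hstar⁻¹ * H) := by
      rw [rot]
      simp only [Matrix.mul_assoc, hq1, hQQ]
      rw [rot]
    have e2b : Matrix.trace (P * (Hstar⁻¹ * P)) = Matrix.trace (Hstar⁻¹ * H) := by
      rw [rot]
      simp only [Matrix.mul_assoc, hc1, hPP]
    have e3 : Matrix.trace (Q * (Hstar * Q)) = Matrix.trace (1 : Matrix (Fin d) (Fin d) ℝ) := by
      rw [rot]
      simp only [Matrix.mul_assoc, hQQ]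
      rw [hsinv']
    rw [hAdef]
    simp only [Matrix.mul_sub, Matrix.sub_mul, Matrix.mul_one, Matrix.one_mul,
      Matrix.trace_sub, Matrix.trace_add, Matrix.mul_assoc, hq1, hq2, hq3, hc1]
    linarith [e1a, e1b, e2a, e2b, e3]
  -- assemble everything
  rw [hLHS, hsec]
  have hm := master_trace_identity T A Z hZZ
  rw [← hWdef] at hm
  linarith [hs1, hs2, hm]
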